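/- The Rogers dilogarithm L satisfies the five-term (pentagon) identity: for all real x, y with 0 < x < 1, 0 < y < 1, one has L(x) + L(y) = L(x(1-y)/(1-xy)) + L(xy) + L(y(1-x)/(1-xy)). -/

import Mathlib

open Real MeasureTheory intervalIntegral Filter Set Topology

noncomputable def rogersF (t : ℝ) : ℝ := Real.log (1 - t) / t + Real.log t / (1 - t)

lemma rogersF_contAt {x : ℝ} (hx0 : 0 < x) (hx1 : x < 1) : ContinuousAt rogersF x := by
  have h1 : (1 : ℝ) - x ≠ 0 := by linarith
  exact ((Real.continuousAt_log h1).comp (by fun_prop) |>.div continuousAt_id hx0.ne').add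
    ((Real.continuousAt_log hx0.ne').div (by fun_prop) h1)

lemma rogersF_intable {b : ℝ} (hb0 : 0 ≤ b) (hb1 : b < 1) :
    IntervalIntegrable rogersF volume 0 b := by
  have hmeas : AEStronglyMeasurable rogersF (volume.restrict (Set.uIoc (0:ℝ) b)) := by
    have : ContinuousOn rogersF (Set.uIoc (0:ℝ) b) := by
      intro t ht
      rw [Set.uIoc_of_le hb0] at ht
      exact (rogersF_contAt ht.1 (lt_of_le_of_lt ht.2 hb1)).continuousWithinAt
    exact this.aestronglyMeasurable measurableSet_uIoc
  have hg : IntervalIntegrable (fun t => (1 + 2 * t ^ (-(1/2) : ℝ)) / (1 - b)) volume 0 b :=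
    ((intervalIntegrable_const.add
      ((intervalIntegral.intervalIntegrable_rpow' (by norm_num)).const_mul 2)).div_const _)
  refine hg.mono_fun' hmeas ?_
  filter_upwards [ae_restrict_mem measurableSet_uIoc] with t ht
  rw [Set.uIoc_of_le hb0] at ht
  obtain ⟨ht0, htb⟩ := ht
  have ht1 : t < 1 := lt_of_le_of_lt htb hb1
  have h1t : (0:ℝ) < 1 - t := by linarith
  have h1b : (0:ℝ) < 1 - b := by linarith
  have hb_t : 1 - b ≤ 1 - t := by linarith
  -- bound |log (1-t)| ≤ t / (1-t)
  have hlog1 : |Real.log (1 - t)| ≤ t / (1 - t) := by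
    have hle : Real.log (1 - t) ≤ 0 := Real.log_nonpos (by linarith) (by linarith)
    rw [abs_of_nonpos hle]
    have := Real.log_le_sub_one_of_pos (x := (1 - t)⁻¹) (by positivity)
    rw [Real.log_inv] at this
    have : -Real.log (1 - t) ≤ (1 - t)⁻¹ - 1 := this
    calc -Real.log (1 - t) ≤ (1 - t)⁻¹ - 1 := this
      _ = t / (1 - t) := by field_simp; ring
  -- bound |log t| ≤ 2 * t ^ (-1/2)
  have hlog2 : |Real.log t| ≤ 2 * t ^ (-(1/2) : ℝ) := by
    have hle : Real.log t ≤ 0 := Real.log_nonpos ht0.le ht1.le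
    rw [abs_of_nonpos hle]
    have h2 := Real.log_le_sub_one_of_pos (x := t ^ (-(1/2) : ℝ)) (by positivity)
    rw [Real.log_rpow ht0] at h2
    nlinarith [Real.rpow_nonneg ht0.le (-(1/2) : ℝ)]
  have habs : ‖rogersF t‖ ≤ (1 + 2 * t ^ (-(1/2) : ℝ)) / (1 - b) := by
    rw [Real.norm_eq_abs]
    have b1 : |Real.log (1 - t) / t| ≤ 1 / (1 - b) := by
      rw [abs_div, abs_of_pos ht0, div_le_div_iff₀ ht0 h1b]
      calc |Real.log (1-t)| * (1 - b) ≤ (t / (1-t)) * (1 - t) :=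
            mul_le_mul hlog1 (by linarith) h1b.le (by positivity)
        _ = t := by field_simp
        _ = 1 * t := (one_mul t).symm
    have b2 : |Real.log t / (1 - t)| ≤ 2 * t ^ (-(1/2) : ℝ) / (1 - b) := by
      rw [abs_div, abs_of_pos h1t]
      exact div_le_div₀ (by positivity) hlog2 h1b hb_t
    calc |rogersF t| ≤ |Real.log (1-t)/t| + |Real.log t/(1-t)| := abs_add_le _ _
      _ ≤ 1 / (1-b) + 2 * t ^ (-(1/2) : ℝ) / (1-b) := add_le_add b1 b2
      _ = (1 + 2 * t ^ (-(1/2) : ℝ)) / (1 - b) := by ring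
  exact habs

noncomputable def rogersL (x : ℝ) : ℝ :=
  -(1 / 2) * ∫ t in (0 : ℝ)..x, (Real.log (1 - t) / t + Real.log t / (1 - t))

lemma rogersL_eq : rogersL = fun x => -(1 / 2) * ∫ t in (0:ℝ)..x, rogersF t := rfl

lemma rogersL_hasDerivAt {x : ℝ} (hx0 : 0 < x) (hx1 : x < 1) :
    HasDerivAt rogersL (-(1 / 2) * rogersF x) x := by
  have hmeas : StronglyMeasurableAtFilter rogersF (𝓝 x) volume :=
    ContinuousAt.stronglyMeasurableAtFilter isOpen_Ioo
      (fun t ht => rogersF_contAt ht.1 ht.2) x ⟨hx0, hx1⟩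
  have h := (intervalIntegral.integral_hasDerivAt_right (rogersF_intable hx0.le hx1)
    hmeas (rogersF_contAt hx0 hx1)).const_mul (-(1/2) : ℝ)
  rw [rogersL_eq]
  convert h using 1

lemma rogersL_tendsto_zero : Tendsto rogersL (𝓝[>] (0:ℝ)) (𝓝 0) := by
  have hint : IntegrableOn rogersF (Set.uIcc (0:ℝ) (1/2)) volume := by
    have := (rogersF_intable (by norm_num) (by norm_num : (1/2:ℝ) < 1))
    rw [intervalIntegrable_iff_integrableOn_Ioc_of_le (by norm_num)] at this
    rw [Set.uIcc_of_le (by norm_num : (0:ℝ) ≤ 1/2)]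
    rwa [integrableOn_Icc_iff_integrableOn_Ioc]
  have hc := intervalIntegral.continuousOn_primitive_interval (a := 0) (b := 1/2) hint
  rw [Set.uIcc_of_le (by norm_num : (0:ℝ) ≤ 1/2)] at hc
  have hc0 : ContinuousWithinAt (fun x => ∫ t in (0:ℝ)..x, rogersF t) (Set.Icc 0 (1/2)) 0 :=
    hc 0 (by norm_num)
  have h0 : (∫ t in (0:ℝ)..(0:ℝ), rogersF t) = 0 := intervalIntegral.integral_same
  have hmem : Set.Icc (0:ℝ) (1/2) ∈ 𝓝[>] (0:ℝ) := by
    filter_upwards [Ioo_mem_nhdsGT_of_mem (by norm_num : (0:ℝ) ∈ Set.Ico 0 (1/2))] with t ht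
    exact ⟨ht.1.le, ht.2.le⟩
  have htd : Tendsto (fun x => ∫ t in (0:ℝ)..x, rogersF t) (𝓝[>] (0:ℝ)) (𝓝 0) :=
by
    have := hc0.tendsto.mono_left (nhdsWithin_le_of_mem hmem)
    rwa [h0] at this
  have := htd.const_mul (-(1/2) : ℝ)
  rw [rogersL_eq]
  simpa using this

lemma pentagon_hasDerivAt {y t : ℝ} (hy0 : 0 < y) (hy1 : y < 1) (ht0 : 0 < t) (ht1 : t < 1) :
    HasDerivAt (fun s => rogersL (s*(1-y)/(1-s*y)) + rogersL (s*y) + rogersL (y*(1-s)/(1-s*y))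
      - rogersL s - rogersL y) 0 t := by
  have hty : 0 < 1 - t * y := by nlinarith
  have h1t : (0:ℝ) < 1 - t := by linarith
  have h1y : (0:ℝ) < 1 - y := by linarith
  have hu0 : 0 < t*(1-y)/(1-t*y) := by positivity
  have hu1 : t*(1-y)/(1-t*y) < 1 := by rw [div_lt_one hty]; nlinarith
  have hw0 : 0 < y*(1-t)/(1-t*y) := by positivity
  have hw1 : y*(1-t)/(1-t*y) < 1 := by rw [div_lt_one hty]; nlinarith
  have hty0 : 0 < t*y := by positivity
  have hty1 : t*y < 1 := by linarith
  -- derivative of inner maps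
  have hud : HasDerivAt (fun s : ℝ => s*(1-y)/(1-s*y))
      (((1-y)*(1-t*y) - (t*(1-y))*(-y)) / (1-t*y)^2) t := by
    have := ((hasDerivAt_id t).mul_const (1-y)).div
      (((hasDerivAt_id t).mul_const y).const_sub 1) (by simpa using hty.ne')
    exact this.congr_deriv (by simp only [id_eq, one_mul])
  have hwd : HasDerivAt (fun s : ℝ => y*(1-s)/(1-s*y))
      (((-y)*(1-t*y) - (y*(1-t))*(-y)) / (1-t*y)^2) t := by
    have hn : HasDerivAt (fun s : ℝ => y*(1-s)) (-y) t := by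
      simpa using (((hasDerivAt_id t).const_sub 1).const_mul y)
    have hd : HasDerivAt (fun s : ℝ => 1 - s*y) (-y) t := by
      simpa using ((hasDerivAt_id t).mul_const y).const_sub 1
    exact hn.div hd (by simpa using hty.ne')
  have hmd : HasDerivAt (fun s : ℝ => s*y) y t := by simpa using (hasDerivAt_id t).mul_const y
  have H1 := (rogersL_hasDerivAt hu0 hu1).comp t hud
  have H2 := (rogersL_hasDerivAt hty0 hty1).comp t hmd
  have H3 := (rogersL_hasDerivAt hw0 hw1).comp t hwd
  have H4 := rogersL_hasDerivAt ht0 ht1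
  have H : HasDerivAt (fun s => rogersL (s*(1-y)/(1-s*y)) + rogersL (s*y)
      + rogersL (y*(1-s)/(1-s*y)) - rogersL s - rogersL y)
      ((-(1/2) * rogersF (t*(1-y)/(1-t*y)) * (((1-y)*(1-t*y) - (t*(1-y))*(-y)) / (1-t*y)^2)
        + -(1/2) * rogersF (t*y) * y
        + -(1/2) * rogersF (y*(1-t)/(1-t*y)) * (((-y)*(1-t*y) - (y*(1-t))*(-y)) / (1-t*y)^2))
        - -(1/2) * rogersF t) t := by
    have := (((H1.add H2).add H3).sub H4).sub_const (rogersL y)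
    simpa [Function.comp] using this
  convert H using 1
  -- now prove the derivative value is zero
  have e1 : 1 - t*(1-y)/(1-t*y) = (1-t)/(1-t*y) := by field_simp; ring
  have e2 : 1 - y*(1-t)/(1-t*y) = (1-y)/(1-t*y) := by
    rw [eq_div_iff hty.ne', sub_mul, div_mul_cancel₀ _ hty.ne']; ring
  have l1 : Real.log (t*(1-y)/(1-t*y)) = Real.log t + Real.log (1-y) - Real.log (1-t*y) := by
    rw [Real.log_div (by positivity) hty.ne', Real.log_mul ht0.ne' h1y.ne']
  have l2 : Real.log (y*(1-t)/(1-t*y)) = Real.log y + Real.log (1-t) - Real.log (1-t*y) := by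
    rw [Real.log_div (by positivity) hty.ne', Real.log_mul hy0.ne' h1t.ne']
  have l3 : Real.log (t*y) = Real.log t + Real.log y := Real.log_mul ht0.ne' hy0.ne'
  have l4 : Real.log ((1-t)/(1-t*y)) = Real.log (1-t) - Real.log (1-t*y) :=
    Real.log_div h1t.ne' hty.ne'
  have l5 : Real.log ((1-y)/(1-t*y)) = Real.log (1-y) - Real.log (1-t*y) :=
    Real.log_div h1y.ne' hty.ne'
  simp only [rogersF, e1, e2, l1, l2, l3, l4, l5]
  field_simp
  ring

theorem rogersL_pentagon (x y : ℝ) (hx0 : 0 < x) (hx1 : x < 1) (hy0 : 0 < y) (hy1 : y < 1) :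
    rogersL x + rogersL y =
      rogersL (x * (1 - y) / (1 - x * y)) + rogersL (x * y) +
        rogersL (y * (1 - x) / (1 - x * y)) := by
  set G : ℝ → ℝ := fun s => rogersL (s*(1-y)/(1-s*y)) + rogersL (s*y) + rogersL (y*(1-s)/(1-s*y))
    - rogersL s - rogersL y with hG
  suffices h : G x = 0 by
    simp only [hG] at h; linarith
  -- G is constant on (0, x]
  have hconst : ∀ ε ∈ Ioo (0:ℝ) x, G ε = G x := by
    intro ε hε
    have hcont : ContinuousOn G (Icc ε x) := fun t ht =>
      (pentagon_hasDerivAt hy0 hy1 (lt_of_lt_of_le hε.1 ht.1)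
        (lt_of_le_of_lt ht.2 hx1)).continuousAt.continuousWithinAt
    have hderiv : ∀ t ∈ Ico ε x, HasDerivWithinAt G 0 (Ici t) t := fun t ht =>
      (pentagon_hasDerivAt hy0 hy1 (lt_of_lt_of_le hε.1 ht.1)
        (lt_trans ht.2 hx1)).hasDerivWithinAt
    exact (constant_of_has_deriv_right_zero hcont hderiv x (right_mem_Icc.2 hε.2.le)).symm
  -- G tends to 0 at 0⁺
  have hT : Tendsto G (𝓝[>] (0:ℝ)) (𝓝 0) := by
    have hIoo : Ioo (0:ℝ) 1 ∈ 𝓝[>] (0:ℝ) :=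
      Ioo_mem_nhdsGT_of_mem (by constructor <;> norm_num)
    have T1 : Tendsto (fun s : ℝ => s*(1-y)/(1-s*y)) (𝓝[>] 0) (𝓝[>] 0) := by
      apply tendsto_nhdsWithin_of_tendsto_nhds_of_eventually_within
      · have hc : ContinuousAt (fun s : ℝ => s*(1-y)/(1-s*y)) 0 :=
          ContinuousAt.div (by fun_prop) (by fun_prop) (by norm_num)
        have := hc.tendsto.mono_left (nhdsWithin_le_nhds (s := Ioi (0:ℝ)))
        simpa using this
      · filter_upwards [hIoo] with s hs
        have : 0 < 1 - s*y := by nlinarith [hs.1, hs.2]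
        exact div_pos (mul_pos hs.1 (by linarith)) this
    have T2 : Tendsto (fun s : ℝ => s*y) (𝓝[>] 0) (𝓝[>] 0) := by
      apply tendsto_nhdsWithin_of_tendsto_nhds_of_eventually_within
      · have hc : ContinuousAt (fun s : ℝ => s*y) 0 := by fun_prop
        have := hc.tendsto.mono_left (nhdsWithin_le_nhds (s := Ioi (0:ℝ)))
        simpa using this
      · filter_upwards [hIoo] with s hs
        exact mul_pos hs.1 hy0
    have T3 : Tendsto (fun s : ℝ => y*(1-s)/(1-s*y)) (𝓝[>] 0) (𝓝 y) := by
      have hc : ContinuousAt (fun s : ℝ => y*(1-s)/(1-s*y)) 0 :=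
        ContinuousAt.div (by fun_prop) (by fun_prop) (by norm_num)
      have := hc.tendsto.mono_left (nhdsWithin_le_nhds (s := Ioi (0:ℝ)))
      simpa using this
    have R1 := rogersL_tendsto_zero.comp T1
    have R2 := rogersL_tendsto_zero.comp T2
    have R3 := ((rogersL_hasDerivAt hy0 hy1).continuousAt.tendsto).comp T3
    have R4 := rogersL_tendsto_zero
    have := (((R1.add R2).add R3).sub R4).sub (tendsto_const_nhds (x := rogersL y))
    simpa [hG, Function.comp] using this
  -- G is eventually the constant G x near 0⁺
  have hev : G =ᶠ[𝓝[>] (0:ℝ)] fun _ => G x := by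
    filter_upwards [Ioo_mem_nhdsGT_of_mem (by exact ⟨le_refl 0, hx0⟩ : (0:ℝ) ∈ Ico 0 x)]
      with ε hε
    exact hconst ε hε
  have hT' : Tendsto G (𝓝[>] (0:ℝ)) (𝓝 (G x)) := Tendsto.congr' hev.symm tendsto_const_nhds
  exact tendsto_nhds_unique hT' hT
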